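/- Let φ be the real root of x^3 - x^2 - 1 = 0 and let b ≥ 2 be an integer. Then log b / log φ is irrational. -/

import Mathlib

/-- coefficients of φ^k = a φ² + b φ + c -/
def ntN : ℕ → ℕ × ℕ × ℕ
  | 0 => (0, 0, 1)
  | k+1 => ((ntN k).1 + (ntN k).2.1, (ntN k).2.2, (ntN k).1)

lemma ntN_spec (φ : ℝ) (hroot : φ ^ 3 = φ ^ 2 + 1) (k : ℕ) :
    φ ^ k = ((ntN k).1 : ℝ) * φ ^ 2 + ((ntN k).2.1 : ℝ) * φ + ((ntN k).2.2 : ℝ) := by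
  induction k with
  | zero => simp [ntN]
  | succ k ih =>
    simp only [ntN]
    rw [pow_succ, ih]
    push_cast
    linear_combination ((ntN k).1 : ℝ) * hroot

lemma ntN_fst_pos : ∀ k, 2 ≤ k → 1 ≤ (ntN k).1 := by
  intro k hk
  induction k, hk using Nat.le_induction with
  | base => decide
  | succ k hk ih => simp only [ntN]; omega

lemma no_cube (a b : ℕ) (ha : 1 ≤ a) (h : a ^ 3 = a ^ 2 * b + 2 * a * b ^ 2 + b ^ 3) :
    False := by
  obtain ⟨a', b', hcop, ha', hb'⟩ := Nat.exists_coprime a b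
  set g := Nat.gcd a b with hg
  have hgpos : 0 < g := Nat.gcd_pos_of_pos_left _ ha
  have h' : a' ^ 3 = a' ^ 2 * b' + 2 * a' * b' ^ 2 + b' ^ 3 := by
    have h2 : a' ^ 3 * g ^ 3 = (a' ^ 2 * b' + 2 * a' * b' ^ 2 + b' ^ 3) * g ^ 3 := by
      rw [ha', hb'] at h; ring_nf at h ⊢; linarith
    exact Nat.eq_of_mul_eq_mul_right (by positivity) h2
  have ha1 : 1 ≤ a' := by
    rcases Nat.eq_zero_or_pos a' with h0 | h0
    · rw [h0] at ha'; omega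
    · exact h0
  have hbdvd : b' ∣ a' ^ 3 := ⟨(a' + b') ^ 2, by rw [h']; ring⟩
  have hb1 : b' = 1 := (hcop.symm.pow_right 3).eq_one_of_dvd hbdvd
  rw [hb1] at h'
  have hadvd : a' ∣ 1 := by
    have h1 : a' ∣ a' ^ 3 := dvd_pow_self a' (by norm_num)
    have h2 : a' ^ 3 = a' * (a' + 2) + 1 := by rw [h']; ring
    rw [h2] at h1
    exact (Nat.dvd_add_right ⟨a' + 2, rfl⟩).mp h1
  have : a' = 1 := Nat.dvd_one.mp hadvd
  rw [this] at h'; omega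

lemma irr_nara (φ : ℝ) (hroot : φ ^ 3 = φ ^ 2 + 1) (hφ : 1 < φ) : Irrational φ := by
  rintro ⟨q, hq⟩
  have h3 : q ^ 3 = q ^ 2 + 1 := by
    have : (q:ℝ) ^ 3 = (q:ℝ) ^ 2 + 1 := by rw [hq]; exact hroot
    exact_mod_cast this
  have hq1 : (1:ℚ) < q := by
    have : (1:ℝ) < (q:ℝ) := by rw [hq]; exact hφ
    exact_mod_cast this
  have hd0 : (0:ℤ) < (q.den : ℤ) := Int.natCast_pos.mpr q.pos
  have key : q.num ^ 3 = q.num ^ 2 * q.den + (q.den : ℤ) ^ 3 := by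
    have hq' := Rat.num_div_den q
    rw [← hq'] at h3
    have hdne : ((q.den : ℚ)) ≠ 0 := by positivity
    field_simp at h3
    have key2 : q.num ^ 3 * (q.den : ℤ) ^ 2
        = (q.num ^ 2 + (q.den : ℤ) ^ 2) * (q.den : ℤ) ^ 3 := by
      have h3' : q.num ^ 3 = (q.den : ℤ) * (q.num ^ 2 + (q.den : ℤ) ^ 2) := by exact_mod_cast h3
      linear_combination ((q.den : ℤ) ^ 2) * h3'
    have key3 : q.num ^ 3 * (q.den : ℤ) ^ 2
        = (q.num ^ 2 * q.den + (q.den : ℤ) ^ 3) * (q.den : ℤ) ^ 2 := by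
      linear_combination key2
    exact mul_right_cancel₀ (pow_ne_zero 2 (ne_of_gt hd0)) key3
  have hdvd : (q.den : ℤ) ∣ q.num ^ 3 := ⟨q.num ^ 2 + (q.den : ℤ) ^ 2, by linear_combination key⟩
  have hdvd' : q.den ∣ q.num.natAbs ^ 3 := by
    have := Int.natAbs_dvd_natAbs.mpr hdvd
    simpa [Int.natAbs_pow] using this
  have hden1 : q.den = 1 := (q.reduced.symm.pow_right 3).eq_one_of_dvd hdvd'
  have hp2 : 2 ≤ q.num := by
    have : (1:ℚ) < (q.num : ℚ) := by
      rw [← Rat.num_div_den q, hden1] at hq1; simpa using hq1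
    have : (1:ℤ) < q.num := by exact_mod_cast this
    omega
  rw [hden1] at key
  push_cast at key
  nlinarith [key, hp2]

theorem irrational_log_ratio_narayana (φ : ℝ) (hroot : φ ^ 3 = φ ^ 2 + 1) (hφ : 1 < φ)
    (b : ℕ) (hb : 2 ≤ b) :
    Irrational (Real.log b / Real.log φ) := by
  have hirr := irr_nara φ hroot hφ
  rintro ⟨r, hr⟩
  have hφpos : (0:ℝ) < φ := lt_trans one_pos hφ
  have hlogφ : 0 < Real.log φ := Real.log_pos hφ
  have hb1 : (1:ℝ) < (b:ℝ) := by exact_mod_cast lt_of_lt_of_le one_lt_two (by exact_mod_cast hb)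
  have hlogb : 0 < Real.log b := Real.log_pos hb1
  have hrpos : (0:ℚ) < r := by
    have : (0:ℝ) < (r:ℝ) := by rw [hr]; positivity
    exact_mod_cast this
  set m : ℕ := r.num.toNat with hm
  set n : ℕ := r.den with hn
  have hm1 : 1 ≤ m := by
    have := Rat.num_pos.mpr hrpos
    omega
  have hn1 : 1 ≤ n := r.pos
  have hnum : ((r.num : ℝ)) = (m : ℝ) := by
    have := Rat.num_pos.mpr hrpos
    rw [hm]; norm_cast; omega
  -- n * log b = m * log φ
  have hlogeq : (n : ℝ) * Real.log b = (m : ℝ) * Real.log φ := by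
    have hrcast : (r:ℝ) = (r.num : ℝ) / (r.den : ℝ) := Rat.cast_def r
    have hden : ((r.den : ℝ)) ≠ 0 := by positivity
    rw [hr] at hrcast
    rw [← hnum]
    field_simp at hrcast ⊢
    linarith [hrcast]
  have hkey : (b:ℝ) ^ n = φ ^ m := by
    have h1 : Real.log ((b:ℝ) ^ n) = Real.log (φ ^ m) := by
      rw [Real.log_pow, Real.log_pow]; exact hlogeq
    have hbp : (0:ℝ) < (b:ℝ) ^ n := by positivity
    have hpp : (0:ℝ) < φ ^ m := by positivity
    calc (b:ℝ)^n = Real.exp (Real.log ((b:ℝ)^n)) := (Real.exp_log hbp).symm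
      _ = Real.exp (Real.log (φ^m)) := by rw [h1]
      _ = φ ^ m := Real.exp_log hpp
  set N : ℕ := b ^ n with hNdef
  have hNeq : φ ^ m = (N : ℝ) := by rw [← hkey, hNdef]; push_cast; ring
  rcases Nat.lt_or_ge m 2 with hm2 | hm2
  · -- m = 1 : φ = N rational
    interval_cases m
    exact hirr ⟨(N:ℚ), by push_cast; rw [← pow_one φ, hNeq]⟩
  · -- m ≥ 2
    set A : ℕ := (ntN m).1 with hA
    set B : ℕ := (ntN m).2.1 with hB
    set C : ℕ := (ntN m).2.2 with hC
    have hApos : 1 ≤ A := ntN_fst_pos m hm2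
    have hspec := ntN_spec φ hroot m
    rw [hNeq] at hspec
    set c : ℤ := (C : ℤ) - (N : ℤ) with hc
    have hQuad : (A:ℝ) * φ ^ 2 + (B:ℝ) * φ + (c:ℝ) = 0 := by
      rw [hc]; push_cast; linarith [hspec]
    set K : ℤ := (B:ℤ) ^ 2 + (A:ℤ) * B - (A:ℤ) * c with hK
    set M : ℤ := (A:ℤ) ^ 2 - (A:ℤ) * c - (B:ℤ) * c with hM
    have hKM : (K:ℝ) * φ = (M:ℝ) := by
      rw [hK, hM]; push_cast
      linear_combination ((A:ℝ)^2) * hroot - ((A:ℝ)*φ - (A:ℝ) - (B:ℝ)) * hQuad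
    by_cases hK0 : K = 0
    · have hM0 : M = 0 := by
        have : (M:ℝ) = 0 := by rw [← hKM, hK0]; simp
        exact_mod_cast this
      have hZ : (A:ℤ) ^ 3 = (A:ℤ) ^ 2 * B + 2 * (A:ℤ) * (B:ℤ) ^ 2 + (B:ℤ) ^ 3 := by
        have hK' : (B:ℤ) ^ 2 + (A:ℤ) * B - (A:ℤ) * c = 0 := by rw [← hK]; exact hK0
        have hM' : (A:ℤ) ^ 2 - (A:ℤ) * c - (B:ℤ) * c = 0 := by rw [← hM]; exact hM0
        linear_combination (A:ℤ) * hM' - ((A:ℤ) + (B:ℤ)) * hK'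
      have hNat : A ^ 3 = A ^ 2 * B + 2 * A * B ^ 2 + B ^ 3 := by exact_mod_cast hZ
      exact no_cube A B hApos hNat
    · refine hirr ⟨(M:ℚ) / (K:ℚ), ?_⟩
      have hKR : ((K:ℚ):ℝ) ≠ 0 := by exact_mod_cast hK0
      push_cast
      rw [div_eq_iff (by exact_mod_cast hK0)]
      linarith [hKM]
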